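/- For every x > 0 and every b ∈ (0,1], the function y ↦ e^{−x·√(1+b²−2b·y)} is absolutely monotonic on (−1,1): for every n ∈ ℕ and every y ∈ (−1,1), its n-th derivative at y is strictly positive. -/

import Mathlib

open Real

noncomputable section

namespace DCV7

private lemma eval_nonneg_of_coeff_nonneg (p : Polynomial ℝ) (h : ∀ i, 0 ≤ p.coeff i)
    {w : ℝ} (hw : 0 ≤ w) : 0 ≤ p.eval w := by
  rw [Polynomial.eval_eq_sum_range]
  exact Finset.sum_nonneg fun i _ => mul_nonneg (h i) (pow_nonneg hw i)

private lemma coeff_mul_nonneg {p q : Polynomial ℝ} (hp : ∀ i, 0 ≤ p.coeff i)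
    (hq : ∀ i, 0 ≤ q.coeff i) : ∀ i, 0 ≤ (p * q).coeff i := by
  intro i
  rw [Polynomial.coeff_mul]
  exact Finset.sum_nonneg fun z _ => mul_nonneg (hp _) (hq _)

/-- For every `x > 0` and `b ∈ (0,1]`, the function `y ↦ e^{−x·√(1+b²−2b·y)}` is absolutely
monotonic on `(−1,1)`: all its derivatives are strictly positive there. -/
theorem absolutely_monotonic (x : ℝ) (hx : 0 < x) (b : ℝ) (hb : b ∈ Set.Ioc (0:ℝ) 1)
    (n : ℕ) (y : ℝ) (hy : y ∈ Set.Ioo (-1:ℝ) 1) :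
    0 < iteratedDeriv n (fun y : ℝ => Real.exp (-x * Real.sqrt (1 + b^2 - 2*b*y))) y := by
  obtain ⟨hb0, hb1⟩ := hb
  have hspos : ∀ z ∈ Set.Iio (1:ℝ), 0 < 1 + b^2 - 2*b*z := by
    intro z hz
    have h1 : 1 + b^2 - 2*b*z = (1-b)^2 + 2*b*(1-z) := by ring
    rw [h1]
    have : 0 < 2*b*(1-z) := by
      have : 0 < 1 - z := by simpa using hz
      positivity
    nlinarith [sq_nonneg (1-b)]
  have main : ∀ n : ℕ, ∃ p : Polynomial ℝ, (∀ i, 0 ≤ p.coeff i) ∧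
      (∀ w : ℝ, 0 < w → 0 < p.eval w) ∧
      ∀ z ∈ Set.Iio (1:ℝ),
        iteratedDeriv n (fun y : ℝ => Real.exp (-x * Real.sqrt (1 + b^2 - 2*b*y))) z
          = Real.exp (-x * Real.sqrt (1 + b^2 - 2*b*z)) *
              p.eval ((Real.sqrt (1 + b^2 - 2*b*z))⁻¹) := by
    intro n
    induction n with
    | zero =>
      refine ⟨1, ?_, ?_, ?_⟩
      · intro i
        simp only [Polynomial.coeff_one]
        split_ifs <;> norm_num
      · intro w hw; simp
      · intro z hz; simp [iteratedDeriv_zero]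
    | succ n ih =>
      obtain ⟨p, hc, hpos, hfe⟩ := ih
      refine ⟨Polynomial.C b * (Polynomial.C x * Polynomial.X * p
        + Polynomial.X ^ 3 * Polynomial.derivative p), ?_, ?_, ?_⟩
      · -- coefficients nonneg
        have hCb : ∀ i, 0 ≤ (Polynomial.C b).coeff i := by
          intro i; simp only [Polynomial.coeff_C]; split_ifs <;> [exact hb0.le; rfl]
        have hCx : ∀ i, 0 ≤ (Polynomial.C x).coeff i := by
          intro i; simp only [Polynomial.coeff_C]; split_ifs <;> [exact hx.le; rfl]
        have hX : ∀ i, 0 ≤ (Polynomial.X : Polynomial ℝ).coeff i := by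
          intro i; rw [Polynomial.coeff_X]; split_ifs <;> norm_num
        have hX3 : ∀ i, 0 ≤ ((Polynomial.X : Polynomial ℝ) ^ 3).coeff i := by
          intro i; rw [Polynomial.coeff_X_pow]; split_ifs <;> norm_num
        have hdp : ∀ i, 0 ≤ (Polynomial.derivative p).coeff i := by
          intro i
          rw [Polynomial.coeff_derivative]
          have := hc (i + 1)
          positivity
        refine coeff_mul_nonneg hCb ?_
        intro i
        rw [Polynomial.coeff_add]
        exact add_nonneg (coeff_mul_nonneg (coeff_mul_nonneg hCx hX) hc i)
          (coeff_mul_nonneg hX3 hdp i)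
      · -- positivity of eval
        intro w hw
        have h1 : 0 < x * w * p.eval w := by
          have := hpos w hw; positivity
        have h2 : 0 ≤ w ^ 3 * (Polynomial.derivative p).eval w := by
          have hd : 0 ≤ (Polynomial.derivative p).eval w := by
            refine eval_nonneg_of_coeff_nonneg _ ?_ hw.le
            intro i
            rw [Polynomial.coeff_derivative]
            have := hc (i + 1)
            positivity
          positivity
        simp only [Polynomial.eval_mul, Polynomial.eval_add, Polynomial.eval_C,
          Polynomial.eval_X, Polynomial.eval_pow]
        nlinarith
      · -- derivative formula
        intro z hz
        have hsz : 0 < 1 + b^2 - 2*b*z := hspos z hz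
        set u : ℝ := Real.sqrt (1 + b^2 - 2*b*z) with hu
        have hu0 : 0 < u := Real.sqrt_pos.mpr hsz
        have hev : iteratedDeriv n (fun y : ℝ => Real.exp (-x * Real.sqrt (1 + b^2 - 2*b*y)))
            =ᶠ[nhds z] (fun y : ℝ => Real.exp (-x * Real.sqrt (1 + b^2 - 2*b*y)) *
              p.eval ((Real.sqrt (1 + b^2 - 2*b*y))⁻¹)) := by
          filter_upwards [Iio_mem_nhds hz] with w hw using hfe w hw
        rw [iteratedDeriv_succ, hev.deriv_eq]
        -- derivative of the inner affine function
        have hds : HasDerivAt (fun y : ℝ => 1 + b^2 - 2*b*y) (-(2*b)) z := by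
          simpa using ((hasDerivAt_id z).const_mul (2*b)).const_sub (1 + b^2)
        have hsq : HasDerivAt (fun y : ℝ => Real.sqrt (1 + b^2 - 2*b*y))
            (1 / (2 * u) * -(2*b)) z := by
          simpa [Function.comp_def] using (Real.hasDerivAt_sqrt hsz.ne').comp z hds
        have hexp : HasDerivAt (fun y : ℝ => Real.exp (-x * Real.sqrt (1 + b^2 - 2*b*y)))
            (Real.exp (-x * u) * (-x * (1 / (2 * u) * -(2*b)))) z := by
          simpa using (hsq.const_mul (-x)).exp
        have hinv : HasDerivAt (fun y : ℝ => (Real.sqrt (1 + b^2 - 2*b*y))⁻¹)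
            (-(1 / (2 * u) * -(2*b)) / u ^ 2) z := hsq.inv hu0.ne'
        have hpol : HasDerivAt (fun y : ℝ => p.eval ((Real.sqrt (1 + b^2 - 2*b*y))⁻¹))
            ((Polynomial.derivative p).eval u⁻¹ * (-(1 / (2 * u) * -(2*b)) / u ^ 2)) z :=
          by have h := (p.hasDerivAt u⁻¹).comp z hinv; exact h
        have htot : HasDerivAt (fun y : ℝ => Real.exp (-x * Real.sqrt (1 + b^2 - 2*b*y)) *
            p.eval ((Real.sqrt (1 + b^2 - 2*b*y))⁻¹)) _ z := hexp.mul hpol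
        rw [htot.deriv]
        simp only [Polynomial.eval_mul, Polynomial.eval_add, Polynomial.eval_C,
          Polynomial.eval_X, Polynomial.eval_pow]
        field_simp
        ring
  obtain ⟨p, hc, hpos, hfe⟩ := main n
  have hy1 : y ∈ Set.Iio (1:ℝ) := hy.2
  rw [hfe y hy1]
  have hsy : 0 < 1 + b^2 - 2*b*y := hspos y hy1
  have h1 : 0 < Real.sqrt (1 + b^2 - 2*b*y) := Real.sqrt_pos.mpr hsy
  have h2 : 0 < p.eval ((Real.sqrt (1 + b^2 - 2*b*y))⁻¹) := hpos _ (by positivity)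
  positivity

end DCV7
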